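/- For every integer g ≥ 2, there exists a real number α with √2 < α < √2 + 2^{1-g} satisfying α^{2g+1} - 2α^{2g-1} - 2α^2 + 1 = 0. -/

import Mathlib

theorem stmt_10 (g : ℕ) (hg : 2 ≤ g) :
    ∃ α : ℝ, Real.sqrt 2 < α ∧ α < Real.sqrt 2 + (2 : ℝ) ^ ((1 : ℤ) - (g : ℤ)) ∧
      α ^ (2 * g + 1) - 2 * α ^ (2 * g - 1) - 2 * α ^ 2 + 1 = 0 := by
  obtain ⟨k, rfl⟩ := Nat.exists_eq_add_of_le hg
  have em : 2 * (2 + k) + 1 = 2 * k + 5 := by omega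
  have en : 2 * (2 + k) - 1 = 2 * k + 3 := by omega
  simp only [em, en]
  set s := Real.sqrt 2 with hsdef
  have hs2 : s ^ 2 = 2 := Real.sq_sqrt (by norm_num)
  have hs1 : 1 < s := by
    nlinarith [Real.sqrt_nonneg 2, hs2]
  have hs0 : 0 < s := by linarith
  set ε : ℝ := (2 : ℝ) ^ ((1 : ℤ) - ((2 + k : ℕ) : ℤ)) with hεdef
  have hεpos : 0 < ε := zpow_pos (by norm_num) _
  have hεhalf : ε ≤ 1 / 2 := by
    rw [hεdef]
    have h1 : (1 : ℤ) - ((2 + k : ℕ) : ℤ) ≤ -1 := by push_cast; omega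
    calc (2:ℝ) ^ ((1 : ℤ) - ((2 + k : ℕ) : ℤ)) ≤ (2:ℝ) ^ (-1 : ℤ) :=
          zpow_le_zpow_right₀ (by norm_num) h1
      _ = 1 / 2 := by norm_num
  have hkey : (2 : ℝ) ^ (k + 1) * ε = 1 := by
    rw [hεdef, show ((2:ℝ) ^ (k+1)) = (2:ℝ) ^ ((k+1 : ℕ) : ℤ) from (zpow_natCast 2 (k+1)).symm,
        ← zpow_add₀ (by norm_num : (2:ℝ) ≠ 0)]
    have : ((k+1:ℕ):ℤ) + ((1 : ℤ) - ((2 + k : ℕ) : ℤ)) = 0 := by push_cast; ring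
    rw [this, zpow_zero]
  set f : ℝ → ℝ := fun x => x ^ (2*k+5) - 2 * x ^ (2*k+3) - 2 * x ^ 2 + 1 with hfdef
  have p1 : s ^ (2*k+5) = 2 ^ (k+2) * s := by
    rw [show 2*k+5 = 2*(k+2)+1 from by ring, pow_succ, pow_mul, hs2]
  have p2 : s ^ (2*k+3) = 2 ^ (k+1) * s := by
    rw [show 2*k+3 = 2*(k+1)+1 from by ring, pow_succ, pow_mul, hs2]
  have hfa : f s = -3 := by
    simp only [hfdef]
    rw [p1, p2, hs2]
    ring
  have hks : (0:ℝ) ≤ (k:ℝ) := Nat.cast_nonneg k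
  -- Bernoulli bound for (s+ε)^(2k+3)
  have hb : s + ε = s * (1 + ε / s) := by field_simp
  have hber : 1 + ((2*k+3 : ℕ) : ℝ) * (ε / s) ≤ (1 + ε / s) ^ (2*k+3) :=
    one_add_mul_le_pow (by have := div_nonneg hεpos.le hs0.le; linarith) _
  have hpow3 : (2:ℝ) ^ (k+1) * (s + (2*(k:ℝ)+3) * ε) ≤ (s + ε) ^ (2*k+3) := by
    rw [hb, mul_pow, p2]
    have h := mul_le_mul_of_nonneg_left hber (by positivity : (0:ℝ) ≤ 2 ^ (k+1) * s)
    calc (2:ℝ) ^ (k+1) * (s + (2*(k:ℝ)+3) * ε)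
        = 2 ^ (k+1) * s * (1 + ((2*k+3 : ℕ) : ℝ) * (ε / s)) := by
          push_cast
          field_simp
      _ ≤ 2 ^ (k+1) * s * (1 + ε / s) ^ (2*k+3) := h
  have hb2 : (s + ε) ^ 2 - 2 = 2 * s * ε + ε ^ 2 := by linear_combination hs2
  have hb2pos : (0:ℝ) ≤ (s + ε) ^ 2 - 2 := by nlinarith
  have H := mul_le_mul_of_nonneg_right hpow3 hb2pos
  have hL : (2:ℝ) ^ (k+1) * (s + (2*(k:ℝ)+3) * ε) * ((s + ε) ^ 2 - 2)
      = (s + (2*(k:ℝ)+3) * ε) * (2*s + ε) := by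
    rw [hb2]
    calc (2:ℝ) ^ (k+1) * (s + (2*(k:ℝ)+3) * ε) * (2 * s * ε + ε ^ 2)
        = ((2:ℝ) ^ (k+1) * ε) * ((s + (2*(k:ℝ)+3) * ε) * (2*s + ε)) := by ring
      _ = (s + (2*(k:ℝ)+3) * ε) * (2*s + ε) := by rw [hkey, one_mul]
  rw [hL] at H
  have hsplit : (s + ε) ^ (2*k+5) = (s + ε) ^ (2*k+3) * (s + ε) ^ 2 := by
    rw [← pow_add]
  have hfb : 0 < f (s + ε) := by
    simp only [hfdef]
    rw [hsplit]
    nlinarith [H, hs2, hεpos.le, hs0.le, hks, mul_nonneg (mul_nonneg hks hs0.le) hεpos.le,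
      mul_nonneg hks (sq_nonneg ε), mul_pos hs0 hεpos, sq_nonneg ε]
  have hab : s ≤ s + ε := by linarith
  have hcont : ContinuousOn f (Set.Icc s (s + ε)) := by
    apply Continuous.continuousOn
    fun_prop
  obtain ⟨α, hα, hfα⟩ := intermediate_value_Ioo hab hcont
    (show (0:ℝ) ∈ Set.Ioo (f s) (f (s + ε)) by rw [hfa]; exact ⟨by norm_num, hfb⟩)
  exact ⟨α, hα.1, hα.2, hfα⟩
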